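/- Fix a power of two n ≥ 2, a positive integer d, N = n^d, and an integer k with 1 ≤ k ≤ N. Let S be a Bernoulli set with rate k/N in (ZMod n)^d, and let B = (B_1,…,B_d) be a vector of powers of two with B_q dividing n for each q. Then for every fixed f ∈ [B], the probability that f ∈ S^(B) is at most (k/|B|)². -/

import Mathlib

open scoped BigOperators ENNReal
open MeasureTheory

theorem fiber_card (n b : ℕ) [NeZero n] (h : b ∣ n) (c : ZMod b) :
    Nat.card {x : ZMod n // ZMod.castHom h (ZMod b) x = c} * b = n := by
  have hb : NeZero b := ⟨fun hb0 => (NeZero.ne n) (by simpa [hb0] using h)⟩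
  set φ := (ZMod.castHom h (ZMod b)).toAddMonoidHom with hφ
  have hsurj : Function.Surjective φ := ZMod.ringHom_surjective (ZMod.castHom h (ZMod b))
  obtain ⟨x₀, hx₀⟩ := hsurj c
  have hx₀' : ZMod.castHom h (ZMod b) x₀ = c := hx₀
  have e1 : {x : ZMod n // ZMod.castHom h (ZMod b) x = c} ≃ φ.ker := by
    refine ⟨fun x => ⟨x.1 - x₀, ?_⟩, fun y => ⟨y.1 + x₀, ?_⟩, fun x => by simp; rfl, fun y => by simp⟩
    · show (ZMod.castHom h (ZMod b)) (x.1 - x₀) = 0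
      rw [map_sub, x.2, hx₀', sub_self]
    · have hy : (ZMod.castHom h (ZMod b)) y.1 = 0 := y.2
      show (ZMod.castHom h (ZMod b)) (y.1 + x₀) = c
      rw [map_add, hy, hx₀', zero_add]
  have e2 : (ZMod n ⧸ φ.ker) ≃+ ZMod b :=
    QuotientAddGroup.quotientKerEquivOfSurjective φ hsurj
  have key := AddSubgroup.card_eq_card_quotient_mul_card_addSubgroup φ.ker
  rw [Nat.card_congr e2.toEquiv, Nat.card_zmod, Nat.card_zmod] at key
  rw [Nat.card_congr e1]
  rw [Nat.mul_comm]; exact key.symm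

theorem stmt11 (m : ℕ) (hm : 1 ≤ m) (n : ℕ) (hn : n = 2 ^ m) [NeZero n]
    (d : ℕ) (hd : 1 ≤ d) (k : ℕ) (hk1 : 1 ≤ k) (hkN : k ≤ n ^ d)
    (B : Fin d → ℕ) (hB2 : ∀ q, ∃ e : ℕ, B q = 2 ^ e) (hB : ∀ q, B q ∣ n)
    (μ : Measure ((Fin d → ZMod n) → Bool))
    (hμ : μ = Measure.pi fun _ : Fin d → ZMod n =>
      (1 - (k : ℝ≥0∞) / ((n : ℝ≥0∞) ^ d)) • Measure.dirac false +
        ((k : ℝ≥0∞) / ((n : ℝ≥0∞) ^ d)) • Measure.dirac true)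
    (f : ∀ q, ZMod (B q)) :
    μ {ω | ∃ g h : Fin d → ZMod n, g ≠ h ∧ ω g = true ∧ ω h = true ∧
        (∀ q, ZMod.castHom (hB q) (ZMod (B q)) (g q) = f q) ∧
        (∀ q, ZMod.castHom (hB q) (ZMod (B q)) (h q) = f q)}
      ≤ ((k : ℝ≥0∞) / ∏ q, ((B q : ℕ) : ℝ≥0∞)) ^ 2 := by
  classical
  set p : ℝ≥0∞ := (k : ℝ≥0∞) / ((n : ℝ≥0∞) ^ d) with hp
  set ν : Measure Bool := (1 - p) • Measure.dirac false + p • Measure.dirac true with hν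
  have hcast : ((n : ℝ≥0∞) ^ d) = ((n ^ d : ℕ) : ℝ≥0∞) := by push_cast; ring
  have hp1 : p ≤ 1 := by
    rw [hp]
    refine ENNReal.div_le_of_le_mul ?_
    rw [one_mul, hcast]
    exact_mod_cast hkN
  have hνtrue : ν {true} = p := by
    simp [hν, Measure.dirac_apply]
  have hνuniv : ν Set.univ = 1 := by
    simp [hν]
    exact tsub_add_cancel_of_le hp1
  haveI : IsFiniteMeasure ν := ⟨by rw [hνuniv]; exact ENNReal.one_lt_top⟩
  have key : ∀ g h : Fin d → ZMod n, g ≠ h →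
      μ {ω : (Fin d → ZMod n) → Bool | ω g = true ∧ ω h = true} = p ^ 2 := by
    intro g h hgh
    have hset : {ω : (Fin d → ZMod n) → Bool | ω g = true ∧ ω h = true}
        = Set.pi Set.univ
          (fun i => if i = g ∨ i = h then ({true} : Set Bool) else Set.univ) := by
      ext ω
      simp only [Set.mem_setOf_eq, Set.mem_pi, Set.mem_univ, forall_true_left]
      constructor
      · rintro ⟨h1, h2⟩ i
        split_ifs with hi
        · rcases hi with rfl | rfl <;> simp [h1, h2]
        · trivial
      · intro hall
        refine ⟨?_, ?_⟩
        · have := hall g; simpa using this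
        · have := hall h; simpa using this
    rw [hμ, hset, Measure.pi_pi]
    have hterm : ∀ i : Fin d → ZMod n,
        ν (if i = g ∨ i = h then ({true} : Set Bool) else Set.univ)
          = if i ∈ ({g, h} : Finset (Fin d → ZMod n)) then p else 1 := by
      intro i
      by_cases hi : i = g ∨ i = h
      · have hif : i ∈ ({g, h} : Finset (Fin d → ZMod n)) := by
          simpa [Finset.mem_insert, Finset.mem_singleton] using hi
        rw [if_pos hi, if_pos hif, hνtrue]
      · have hif : i ∉ ({g, h} : Finset (Fin d → ZMod n)) := by
          simpa [Finset.mem_insert, Finset.mem_singleton] using hi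
        rw [if_neg hi, if_neg hif, hνuniv]
    rw [Finset.prod_congr rfl (fun i _ => hterm i), Finset.prod_ite_mem,
      Finset.univ_inter, Finset.prod_const,
      Finset.card_insert_of_notMem (by simpa using hgh), Finset.card_singleton]
  set cond : (Fin d → ZMod n) → Prop :=
    fun g => ∀ q, ZMod.castHom (hB q) (ZMod (B q)) (g q) = f q with hcond
  set Fs : Finset (Fin d → ZMod n) := Finset.univ.filter cond with hFs
  set T : Finset ((Fin d → ZMod n) × (Fin d → ZMod n)) :=
    Finset.univ.filter (fun gh => gh.1 ≠ gh.2 ∧ cond gh.1 ∧ cond gh.2) with hT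
  have hsub : {ω : (Fin d → ZMod n) → Bool | ∃ g h : Fin d → ZMod n,
      g ≠ h ∧ ω g = true ∧ ω h = true ∧
      (∀ q, ZMod.castHom (hB q) (ZMod (B q)) (g q) = f q) ∧
      (∀ q, ZMod.castHom (hB q) (ZMod (B q)) (h q) = f q)}
      ⊆ ⋃ gh ∈ T, {ω : (Fin d → ZMod n) → Bool | ω gh.1 = true ∧ ω gh.2 = true} := by
    rintro ω ⟨g, h, hgh, hg, hh, hcg, hch⟩
    have hmem : (g, h) ∈ T := by
      rw [hT, Finset.mem_filter]
      exact ⟨Finset.mem_univ _, hgh, hcg, hch⟩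
    exact Set.mem_biUnion hmem ⟨hg, hh⟩
  have hTsub : T ⊆ Fs ×ˢ Fs := by
    intro gh hgh
    rw [hT, Finset.mem_filter] at hgh
    rw [Finset.mem_product, hFs, Finset.mem_filter, Finset.mem_filter]
    exact ⟨⟨Finset.mem_univ _, hgh.2.2.1⟩, ⟨Finset.mem_univ _, hgh.2.2.2⟩⟩
  have hcard : T.card ≤ Fs.card * Fs.card := by
    calc T.card ≤ (Fs ×ˢ Fs).card := Finset.card_le_card hTsub
      _ = Fs.card * Fs.card := Finset.card_product _ _
  have hM : Fs.card * ∏ q, B q = n ^ d := by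
    have h1 : Fs.card = Fintype.card {g : Fin d → ZMod n // cond g} :=
      (Fintype.card_subtype _).symm
    have h2 : Fintype.card {g : Fin d → ZMod n // cond g}
        = ∏ q, Nat.card {x : ZMod n // ZMod.castHom (hB q) (ZMod (B q)) x = f q} := by
      rw [Fintype.card_congr (Equiv.subtypePiEquivPi (p := fun q x =>
        ZMod.castHom (hB q) (ZMod (B q)) x = f q)), Fintype.card_pi]
      exact Finset.prod_congr rfl fun q _ => (Nat.card_eq_fintype_card).symm
    rw [h1, h2, ← Finset.prod_mul_distrib]
    calc (∏ q, Nat.card {x : ZMod n // ZMod.castHom (hB q) (ZMod (B q)) x = f q} * B q)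
        = ∏ _q : Fin d, n := Finset.prod_congr rfl fun q _ => fiber_card n (B q) (hB q) (f q)
      _ = n ^ d := by simp
  have hnd0 : n ^ d ≠ 0 := pow_ne_zero d (NeZero.ne n)
  have hM0 : (Fs.card : ℝ≥0∞) ≠ 0 := by
    have : Fs.card ≠ 0 := fun h0 => hnd0 (by rw [← hM, h0, Nat.zero_mul])
    exact_mod_cast this
  have hbcast : (∏ q, ((B q : ℕ) : ℝ≥0∞)) = ((∏ q, B q : ℕ) : ℝ≥0∞) := by
    push_cast; ring
  have hMp : (Fs.card : ℝ≥0∞) * p = (k : ℝ≥0∞) / ((∏ q, B q : ℕ) : ℝ≥0∞) := by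
    rw [hp, hcast, ← hM]
    push_cast
    rw [← mul_div_assoc]
    exact ENNReal.mul_div_mul_left _ _ hM0 (ENNReal.natCast_ne_top _)
  calc μ {ω | ∃ g h : Fin d → ZMod n, g ≠ h ∧ ω g = true ∧ ω h = true ∧
        (∀ q, ZMod.castHom (hB q) (ZMod (B q)) (g q) = f q) ∧
        (∀ q, ZMod.castHom (hB q) (ZMod (B q)) (h q) = f q)}
      ≤ μ (⋃ gh ∈ T, {ω : (Fin d → ZMod n) → Bool | ω gh.1 = true ∧ ω gh.2 = true}) :=
        measure_mono hsub
    _ ≤ ∑ gh ∈ T, μ {ω : (Fin d → ZMod n) → Bool | ω gh.1 = true ∧ ω gh.2 = true} :=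
        measure_biUnion_finset_le T _
    _ = ∑ gh ∈ T, p ^ 2 := Finset.sum_congr rfl fun gh hgh =>
        key gh.1 gh.2 ((Finset.mem_filter.mp hgh).2.1)
    _ = T.card * p ^ 2 := by rw [Finset.sum_const, nsmul_eq_mul]
    _ ≤ (Fs.card * Fs.card : ℕ) * p ^ 2 :=
        mul_le_mul_left (by exact_mod_cast hcard) _
    _ = ((Fs.card : ℝ≥0∞) * p) ^ 2 := by push_cast; ring
    _ = ((k : ℝ≥0∞) / ((∏ q, B q : ℕ) : ℝ≥0∞)) ^ 2 := by rw [hMp]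
    _ = ((k : ℝ≥0∞) / ∏ q, ((B q : ℕ) : ℝ≥0∞)) ^ 2 := by rw [hbcast]
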